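/- For the symmetric group S_t, the number j₄(S_t) of elements of order dividing 4 satisfies j₄(S_t) < (t!)^{3/4} · e^{c·t} for some absolute constant c and all t ≥ 1. -/

import Mathlib

open Equiv Equiv.Perm

/-- permCongr as a MulEquiv -/
def permCongrMul {α β : Type*} (e : α ≃ β) : Perm α ≃* Perm β :=
  { e.permCongr with
    map_mul' := fun σ τ => by
      ext x
      simp [Equiv.permCongr_apply, Equiv.Perm.mul_apply] }

noncomputable def j4 (n : ℕ) : ℕ := Nat.card {σ : Perm (Fin n) // σ ^ 4 = 1}

lemma j4_card (β : Type*) [Fintype β] :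
    Nat.card {σ : Perm β // σ ^ 4 = 1} = j4 (Fintype.card β) := by
  classical
  apply Nat.card_congr
  refine Equiv.subtypeEquiv (permCongrMul (Fintype.equivFin β)).toEquiv (fun σ => ?_)
  constructor
  · intro h
    show (permCongrMul (Fintype.equivFin β)) σ ^ 4 = 1
    rw [← map_pow, h, map_one]
  · intro h
    have : (permCongrMul (Fintype.equivFin β)) (σ ^ 4) = 1 := by rw [map_pow]; exact h
    exact (MulEquiv.map_eq_one_iff _).mp this

section restrict
variable {α : Type*} [Fintype α] [DecidableEq α]

lemma mem_of_apply_mem (σ : Perm α) (s : Finset α) (h : ∀ x ∈ s, σ x ∈ s)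
    {x : α} (hx : σ x ∈ s) : x ∈ s := by
  have himg : s.image σ = s :=
    Finset.eq_of_subset_of_card_le (Finset.image_subset_iff.2 h)
      (le_of_eq (Finset.card_image_of_injective s σ.injective).symm)
  have : σ x ∈ s.image σ := by rw [himg]; exact hx
  obtain ⟨y, hy, hyx⟩ := Finset.mem_image.mp this
  rwa [← σ.injective hyx]

lemma compl_iff (σ : Perm α) (s : Finset α) (h : ∀ x ∈ s, σ x ∈ s) :
    ∀ x, x ∉ s ↔ σ x ∉ s := by
  intro x
  constructor
  · intro hx hc; exact hx (mem_of_apply_mem σ s h hc)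
  · intro hx hc; exact hx (h x hc)

/-- restriction of σ to the complement of an invariant set, transported to `Fin m` -/
noncomputable def restrictTo (σ : Perm α) (hσ : σ ^ 4 = 1) (s : Finset α)
    (h : ∀ x ∈ s, σ x ∈ s) (m : ℕ) (hm : Fintype.card {x : α // x ∉ s} = m) :
    {ρ : Perm (Fin m) // ρ ^ 4 = 1} := by
  refine ⟨(permCongrMul ((Fintype.equivFin {x : α // x ∉ s}).trans (finCongr hm)))
    (σ.subtypePerm (fun x => (compl_iff σ s h x).symm)), ?_⟩
  have h1 : ∀ (hf : ∀ x : α, ((σ ^ 4) x ∉ s) ↔ (x ∉ s)), (σ ^ 4).subtypePerm (p := fun x => x ∉ s) hf = 1 := by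
    intro hf; ext x; simp [hσ]
  rw [← map_pow, Equiv.Perm.subtypePerm_pow, h1, map_one]

lemma restrictTo_inj {σ σ' : Perm α} (hσ : σ ^ 4 = 1) (hσ' : σ' ^ 4 = 1) (s : Finset α)
    (h : ∀ x ∈ s, σ x ∈ s) (h' : ∀ x ∈ s, σ' x ∈ s) (m : ℕ)
    (hm : Fintype.card {x : α // x ∉ s} = m)
    (heq : restrictTo σ hσ s h m hm = restrictTo σ' hσ' s h' m hm) :
    ∀ x ∉ s, σ x = σ' x := by
  intro x hx
  have h2 : σ.subtypePerm (p := fun x => x ∉ s) (fun x => (compl_iff σ s h x).symm) = σ'.subtypePerm (p := fun x => x ∉ s) (fun x => (compl_iff σ' s h' x).symm) := by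
    have := Subtype.ext_iff.mp heq
    exact (permCongrMul ((Fintype.equivFin {x : α // x ∉ s}).trans (finCongr hm))).injective this
  have := DFunLike.congr_fun h2 ⟨x, hx⟩
  simpa [Equiv.Perm.subtypePerm_apply, Subtype.ext_iff] using this

end restrict

section rec

lemma key4 {n : ℕ} {σ : Perm (Fin n)} (hσ : σ ^ 4 = 1) (x : Fin n) : σ (σ (σ (σ x))) = x := by
  have h : (σ ^ 4) x = x := by rw [hσ]; rfl
  simpa [pow_succ, Equiv.Perm.mul_apply] using h

lemma card_compl {n : ℕ} (s : Finset (Fin n)) :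
    Fintype.card {x : Fin n // x ∉ s} = n - s.card := by
  classical
  have h := Fintype.card_subtype_compl (fun x : Fin n => x ∈ s)
  simpa [Fintype.card_coe, Fintype.card_fin] using h

variable {k : ℕ}

lemma distinct4 {σ : Perm (Fin (k+4))} (hσ : σ ^ 4 = 1)
    (h1 : σ 0 ≠ 0) (h2 : σ (σ 0) ≠ 0) :
    σ (σ 0) ≠ σ 0 ∧ σ (σ (σ 0)) ≠ 0 ∧ σ (σ (σ 0)) ≠ σ 0 ∧ σ (σ (σ 0)) ≠ σ (σ 0) := by
  have hk := key4 hσ 0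
  exact ⟨fun h => h1 (σ.injective h), fun h => h1 ((congrArg σ h).symm.trans hk),
    fun h => h2 (σ.injective h), fun h => h1 (σ.injective (σ.injective h))⟩

lemma inv1 {σ : Perm (Fin (k+4))} (h1 : σ 0 = 0) :
    ∀ x ∈ ({0} : Finset (Fin (k+4))), σ x ∈ ({0} : Finset (Fin (k+4))) := by
  intro x hx
  simp only [Finset.mem_singleton] at hx ⊢
  rw [hx, h1]

lemma card1 : Fintype.card {x : Fin (k+4) // x ∉ ({0} : Finset (Fin (k+4)))} = k + 3 := by
  rw [card_compl]; simp

lemma inv2 {σ : Perm (Fin (k+4))} (hσ : σ ^ 4 = 1) (h2 : σ (σ 0) = 0) :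
    ∀ x ∈ ({0, σ 0} : Finset (Fin (k+4))), σ x ∈ ({0, σ 0} : Finset (Fin (k+4))) := by
  intro x hx
  simp only [Finset.mem_insert, Finset.mem_singleton] at hx ⊢
  rcases hx with h | h
  · rw [h]; right; rfl
  · rw [h, h2]; left; rfl

lemma card2 {σ : Perm (Fin (k+4))} (h1 : σ 0 ≠ 0) :
    Fintype.card {x : Fin (k+4) // x ∉ ({0, σ 0} : Finset (Fin (k+4)))} = k + 2 := by
  rw [card_compl]
  rw [Finset.card_insert_of_notMem (by simp [Ne.symm h1]), Finset.card_singleton]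
  omega

lemma inv3 {σ : Perm (Fin (k+4))} (hσ : σ ^ 4 = 1) :
    ∀ x ∈ ({0, σ 0, σ (σ 0), σ (σ (σ 0))} : Finset (Fin (k+4))),
      σ x ∈ ({0, σ 0, σ (σ 0), σ (σ (σ 0))} : Finset (Fin (k+4))) := by
  have hk := key4 hσ 0
  intro x hx
  simp only [Finset.mem_insert, Finset.mem_singleton] at hx ⊢
  rcases hx with h | h | h | h
  · rw [h]; tauto
  · rw [h]; tauto
  · rw [h]; tauto
  · rw [h, hk]; tauto

lemma card3 {σ : Perm (Fin (k+4))} (hσ : σ ^ 4 = 1)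
    (h1 : σ 0 ≠ 0) (h2 : σ (σ 0) ≠ 0) :
    Fintype.card {x : Fin (k+4) // x ∉ ({0, σ 0, σ (σ 0), σ (σ (σ 0))} : Finset (Fin (k+4)))} = k := by
  obtain ⟨hcb, hd0, hdb, hdc⟩ := distinct4 hσ h1 h2
  rw [card_compl]
  rw [Finset.card_insert_of_notMem (by intro hmem; simp only [Finset.mem_insert, Finset.mem_singleton] at hmem; rcases hmem with h | h | h; exacts [h1 h.symm, h2 h.symm, hd0 h.symm]),
    Finset.card_insert_of_notMem (by intro hmem; simp only [Finset.mem_insert, Finset.mem_singleton] at hmem; rcases hmem with h | h; exacts [hcb h.symm, hdb h.symm]),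
    Finset.card_insert_of_notMem (by intro hmem; simp only [Finset.mem_singleton] at hmem; exact hdc hmem.symm),
    Finset.card_singleton]
  omega

/-- the classifying injection -/
noncomputable def Ymap (k : ℕ) (σp : {σ : Perm (Fin (k+4)) // σ ^ 4 = 1}) :
    {ρ : Perm (Fin (k+3)) // ρ ^ 4 = 1} ⊕
      (Fin (k+4) × {ρ : Perm (Fin (k+2)) // ρ ^ 4 = 1}) ⊕
      ((Fin (k+4) × Fin (k+4) × Fin (k+4)) × {ρ : Perm (Fin k) // ρ ^ 4 = 1}) :=
  if h1 : σp.1 0 = 0 then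
    Sum.inl (restrictTo σp.1 σp.2 {0} (inv1 h1) (k+3) card1)
  else if h2 : σp.1 (σp.1 0) = 0 then
    Sum.inr (Sum.inl (σp.1 0,
      restrictTo σp.1 σp.2 {0, σp.1 0} (inv2 σp.2 h2) (k+2) (card2 h1)))
  else
    Sum.inr (Sum.inr ((σp.1 0, σp.1 (σp.1 0), σp.1 (σp.1 (σp.1 0))),
      restrictTo σp.1 σp.2 {0, σp.1 0, σp.1 (σp.1 0), σp.1 (σp.1 (σp.1 0))}
        (inv3 σp.2) k (card3 σp.2 h1 h2)))

lemma restrictTo_inj2 {α : Type*} [Fintype α] [DecidableEq α]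
    {σ σ' : Perm α} (hσ : σ ^ 4 = 1) (hσ' : σ' ^ 4 = 1) (s s' : Finset α)
    (hss : s = s') (h : ∀ x ∈ s, σ x ∈ s) (h' : ∀ x ∈ s', σ' x ∈ s') (m : ℕ)
    (hm : Fintype.card {x : α // x ∉ s} = m) (hm' : Fintype.card {x : α // x ∉ s'} = m)
    (heq : restrictTo σ hσ s h m hm = restrictTo σ' hσ' s' h' m hm') :
    ∀ x ∉ s, σ x = σ' x := by
  subst hss
  exact restrictTo_inj hσ hσ' s h h' m hm heq

lemma Ymap_inj : Function.Injective (Ymap k) := by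
  rintro ⟨σ, hσ⟩ ⟨σ', hσ'⟩ heq
  unfold Ymap at heq
  simp only at heq
  by_cases h1 : σ 0 = 0 <;> by_cases h1' : σ' 0 = 0
  · rw [dif_pos h1, dif_pos h1', Sum.inl.injEq] at heq
    have hoff := restrictTo_inj hσ hσ' {0} (inv1 h1) (inv1 h1') (k+3) card1 heq
    apply Subtype.ext; apply Equiv.ext; intro x
    by_cases hx : x ∈ ({0} : Finset (Fin (k+4)))
    · simp only [Finset.mem_singleton] at hx; rw [hx, h1, h1']
    · exact hoff x hx
  · rw [dif_pos h1, dif_neg h1'] at heq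
    split_ifs at heq <;> simp at heq
  · rw [dif_neg h1, dif_pos h1'] at heq
    split_ifs at heq <;> simp at heq
  · rw [dif_neg h1, dif_neg h1'] at heq
    by_cases h2 : σ (σ 0) = 0 <;> by_cases h2' : σ' (σ' 0) = 0
    · rw [dif_pos h2, dif_pos h2'] at heq
      simp only [Sum.inr.injEq, Sum.inl.injEq, Prod.mk.injEq] at heq
      obtain ⟨hb, hr⟩ := heq
      have hss : ({0, σ 0} : Finset (Fin (k+4))) = {0, σ' 0} := by rw [hb]
      have hoff := restrictTo_inj2 hσ hσ' _ _ hss (inv2 hσ h2) (inv2 hσ' h2') (k+2)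
        (card2 h1) (card2 h1') hr
      apply Subtype.ext; apply Equiv.ext; intro x
      by_cases hx : x ∈ ({0, σ 0} : Finset (Fin (k+4)))
      · simp only [Finset.mem_insert, Finset.mem_singleton] at hx
        rcases hx with h | h
        · rw [h, hb]
        · rw [h, h2, hb, h2']
      · exact hoff x hx
    · rw [dif_pos h2, dif_neg h2'] at heq; simp at heq
    · rw [dif_neg h2, dif_pos h2'] at heq; simp at heq
    · rw [dif_neg h2, dif_neg h2'] at heq
      simp only [Sum.inr.injEq, Prod.mk.injEq] at heq
      obtain ⟨⟨hb, hc, hd⟩, hr⟩ := heq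
      have hss : ({0, σ 0, σ (σ 0), σ (σ (σ 0))} : Finset (Fin (k+4))) =
          {0, σ' 0, σ' (σ' 0), σ' (σ' (σ' 0))} := by rw [hd, hc, hb]
      have hoff := restrictTo_inj2 hσ hσ' _ _ hss (inv3 hσ) (inv3 hσ') k
        (card3 hσ h1 h2) (card3 hσ' h1' h2') hr
      apply Subtype.ext; apply Equiv.ext; intro x
      by_cases hx : x ∈ ({0, σ 0, σ (σ 0), σ (σ (σ 0))} : Finset (Fin (k+4)))
      · simp only [Finset.mem_insert, Finset.mem_singleton] at hx
        rcases hx with h | h | h | h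
        · rw [h, hb]
        · rw [h, hc, hb]
        · rw [h, hd, hc]
        · rw [h, key4 hσ 0, hd, key4 hσ' 0]
      · exact hoff x hx

lemma j4_rec : j4 (k+4) ≤ j4 (k+3) + (k+4) * j4 (k+2) + (k+4)^3 * j4 k := by
  classical
  have hle := Nat.card_le_card_of_injective _ (Ymap_inj (k := k))
  have hcard : Nat.card ({ρ : Perm (Fin (k+3)) // ρ ^ 4 = 1} ⊕
      (Fin (k+4) × {ρ : Perm (Fin (k+2)) // ρ ^ 4 = 1}) ⊕
      ((Fin (k+4) × Fin (k+4) × Fin (k+4)) × {ρ : Perm (Fin k) // ρ ^ 4 = 1})) =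
      j4 (k+3) + (k+4) * j4 (k+2) + (k+4)^3 * j4 k := by
    rw [Nat.card_sum, Nat.card_sum, Nat.card_prod, Nat.card_prod, Nat.card_prod, Nat.card_prod]
    unfold j4
    simp only [Nat.card_eq_fintype_card, Fintype.card_fin]
    ring
  rw [hcard] at hle
  exact hle

end rec

section analytic
open Real

noncomputable def gbd (t : ℕ) : ℝ := (t.factorial : ℝ) ^ ((3:ℝ)/4) * Real.exp (2 * t)

lemma gbd_pos (t : ℕ) : 0 < gbd t := by
  unfold gbd
  positivity

lemma exp_one_lb : (2.7182818283 : ℝ) < Real.exp 1 := Real.exp_one_gt_d9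

lemma exp2_ge : (7 : ℝ) ≤ Real.exp 2 := by
  have h : Real.exp 2 = (Real.exp 1) ^ (2:ℕ) := by
    rw [← Real.exp_nat_mul]; norm_num
  rw [h]
  nlinarith [exp_one_lb]

lemma exp4_ge : (54 : ℝ) ≤ Real.exp 4 := by
  have h : Real.exp 4 = (Real.exp 1) ^ (4:ℕ) := by
    rw [← Real.exp_nat_mul]; norm_num
  rw [h]
  have h4 : (2.7182818283:ℝ)^(4:ℕ) ≤ (Real.exp 1)^(4:ℕ) := pow_le_pow_left₀ (by norm_num) exp_one_lb.le 4
  nlinarith [h4]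

lemma exp8_ge : (2900 : ℝ) ≤ Real.exp 8 := by
  have h : Real.exp 8 = (Real.exp 1) ^ (8:ℕ) := by
    rw [← Real.exp_nat_mul]; norm_num
  rw [h]
  have h8 : (2.7182818283:ℝ)^(8:ℕ) ≤ (Real.exp 1)^(8:ℕ) := pow_le_pow_left₀ (by norm_num) exp_one_lb.le 8
  nlinarith [h8]

lemma rpow34_le {a b : ℕ} (h : a ≤ b) :
    ((a.factorial : ℝ)) ^ ((3:ℝ)/4) ≤ ((b.factorial : ℝ)) ^ ((3:ℝ)/4) := by
  apply Real.rpow_le_rpow (by positivity)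
  · exact_mod_cast Nat.factorial_le h
  · norm_num

lemma le_of_pow4 {x y : ℝ} (hy : 0 ≤ y) (h : x ^ (4:ℕ) ≤ y ^ (4:ℕ)) : x ≤ y :=
  le_of_pow_le_pow_left₀ (by norm_num) hy h

lemma rpow34_pow4 {z : ℝ} (hz : 0 ≤ z) : (z ^ ((3:ℝ)/4)) ^ (4:ℕ) = z ^ (3:ℕ) := by
  rw [← Real.rpow_natCast (z ^ ((3:ℝ)/4)) 4, ← Real.rpow_mul hz, ← Real.rpow_natCast z 3]
  norm_num

lemma keyB (k : ℕ) : ((k:ℝ) + 4) ≤ 2 * ((((k:ℝ)+4) * ((k:ℝ)+3)) ^ ((3:ℝ)/4)) := by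
  have hk : (0:ℝ) ≤ (k:ℝ) := Nat.cast_nonneg k
  apply le_of_pow4 (by positivity)
  rw [mul_pow, rpow34_pow4 (by positivity)]
  nlinarith [hk, pow_nonneg hk 2, pow_nonneg hk 3, pow_nonneg hk 4, pow_nonneg hk 5, pow_nonneg hk 6]

lemma keyC (k : ℕ) : ((k:ℝ) + 4) ^ (3:ℕ) ≤
    23 * (((((k:ℝ)+4) * ((k:ℝ)+3)) * (((k:ℝ)+2) * ((k:ℝ)+1))) ^ ((3:ℝ)/4)) := by
  have hk : (0:ℝ) ≤ (k:ℝ) := Nat.cast_nonneg k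
  apply le_of_pow4 (by positivity)
  rw [mul_pow, rpow34_pow4 (by positivity)]
  have hv : ((k:ℝ)+4)^(3:ℕ) ≤ 64 * (((k:ℝ)+3) * (((k:ℝ)+2) * ((k:ℝ)+1))) := by nlinarith [hk, pow_nonneg hk 2, pow_nonneg hk 3]
  have hu : (0:ℝ) ≤ ((k:ℝ)+4)^(3:ℕ) := by positivity
  have hv3 : (((k:ℝ)+4)^(3:ℕ))^(3:ℕ) ≤ (64 * (((k:ℝ)+3) * (((k:ℝ)+2) * ((k:ℝ)+1))))^(3:ℕ) :=
    pow_le_pow_left₀ hu hv 3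
  have expand : ((((k:ℝ)+4) * ((k:ℝ)+3)) * (((k:ℝ)+2) * ((k:ℝ)+1))) ^ (3:ℕ) =
      ((k:ℝ)+4)^(3:ℕ) * ((((k:ℝ)+3) * (((k:ℝ)+2) * ((k:ℝ)+1))))^(3:ℕ) := by ring
  rw [expand]
  have h64 : (0:ℝ) < 64 := by norm_num
  nlinarith [hv3, hu, pow_pos (show (0:ℝ) < (k:ℝ)+4 by positivity) 3,
    pow_nonneg (show (0:ℝ) ≤ ((k:ℝ)+3) * (((k:ℝ)+2) * ((k:ℝ)+1)) by positivity) 3]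

end analytic

lemma gbd_step (k : ℕ) :
    gbd (k+3) + ((k:ℝ)+4) * gbd (k+2) + ((k:ℝ)+4)^(3:ℕ) * gbd k ≤ gbd (k+4) := by
  have hfac2 : ((k+4).factorial : ℝ) = (((k:ℝ)+4) * ((k:ℝ)+3)) * ((k+2).factorial : ℝ) := by
    rw [show k+4 = (k+3)+1 from rfl, Nat.factorial_succ, show k+3 = (k+2)+1 from rfl,
      Nat.factorial_succ]
    push_cast; ring
  have hfac4 : ((k+4).factorial : ℝ) =
      ((((k:ℝ)+4) * ((k:ℝ)+3)) * (((k:ℝ)+2) * ((k:ℝ)+1))) * (k.factorial : ℝ) := by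
    rw [show k+4 = (k+3)+1 from rfl, Nat.factorial_succ, show k+3 = (k+2)+1 from rfl,
      Nat.factorial_succ, show k+2 = (k+1)+1 from rfl, Nat.factorial_succ, Nat.factorial_succ]
    push_cast; ring
  set F4 := ((k+4).factorial : ℝ) ^ ((3:ℝ)/4) with hF4def
  set E4 := Real.exp (2 * ((k:ℝ)+4)) with hE4def
  have hF4nn : (0:ℝ) ≤ F4 := by rw [hF4def]; positivity
  -- A bound
  have hA : ((k+3).factorial:ℝ)^((3:ℝ)/4) * Real.exp (2*((k:ℝ)+3)) * 7 ≤ F4 * E4 := by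
    have e34 : E4 = Real.exp (2*((k:ℝ)+3)) * Real.exp 2 := by
      rw [hE4def, ← Real.exp_add]; congr 1; ring
    rw [e34]
    have h1 : ((k+3).factorial:ℝ)^((3:ℝ)/4) ≤ F4 := rpow34_le (by omega)
    have h2 : (0:ℝ) < Real.exp (2*((k:ℝ)+3)) := Real.exp_pos _
    have h3 : (0:ℝ) ≤ F4 * Real.exp (2*((k:ℝ)+3)) := by positivity
    nlinarith [mul_le_mul_of_nonneg_right h1 h2.le, mul_le_mul_of_nonneg_left exp2_ge h3]
  -- B bound
  have hB : ((k:ℝ)+4) * (((k+2).factorial:ℝ)^((3:ℝ)/4) * Real.exp (2*((k:ℝ)+2))) * 27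
      ≤ F4 * E4 := by
    have e24 : E4 = Real.exp (2*((k:ℝ)+2)) * Real.exp 4 := by
      rw [hE4def, ← Real.exp_add]; congr 1; ring
    have hsplit : F4 = ((((k:ℝ)+4) * ((k:ℝ)+3)))^((3:ℝ)/4) * ((k+2).factorial:ℝ)^((3:ℝ)/4) := by
      rw [hF4def, hfac2, Real.mul_rpow (by positivity) (by positivity)]
    rw [e24, hsplit]
    have h2 : (0:ℝ) < Real.exp (2*((k:ℝ)+2)) := Real.exp_pos _
    have hWnn : (0:ℝ) ≤ ((((k:ℝ)+4) * ((k:ℝ)+3)))^((3:ℝ)/4) := by positivity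
    have hfnn : (0:ℝ) ≤ ((k+2).factorial:ℝ)^((3:ℝ)/4) := by positivity
    calc ((k:ℝ)+4) * (((k+2).factorial:ℝ)^((3:ℝ)/4) * Real.exp (2*((k:ℝ)+2))) * 27
        ≤ (2 * ((((k:ℝ)+4) * ((k:ℝ)+3)))^((3:ℝ)/4)) *
          (((k+2).factorial:ℝ)^((3:ℝ)/4) * Real.exp (2*((k:ℝ)+2))) * 27 := by
          have := keyB k
          gcongr
      _ = ((((k:ℝ)+4) * ((k:ℝ)+3)))^((3:ℝ)/4) * ((k+2).factorial:ℝ)^((3:ℝ)/4) *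
          (Real.exp (2*((k:ℝ)+2)) * 54) := by ring
      _ ≤ ((((k:ℝ)+4) * ((k:ℝ)+3)))^((3:ℝ)/4) * ((k+2).factorial:ℝ)^((3:ℝ)/4) *
          (Real.exp (2*((k:ℝ)+2)) * Real.exp 4) := by
          have := exp4_ge
          gcongr
  -- C bound
  have hC : ((k:ℝ)+4)^(3:ℕ) * ((k.factorial:ℝ)^((3:ℝ)/4) * Real.exp (2*(k:ℝ))) * 126
      ≤ F4 * E4 := by
    have e04 : E4 = Real.exp (2*(k:ℝ)) * Real.exp 8 := by
      rw [hE4def, ← Real.exp_add]; congr 1; ring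
    have hsplit : F4 = (((((k:ℝ)+4) * ((k:ℝ)+3)) * (((k:ℝ)+2) * ((k:ℝ)+1))))^((3:ℝ)/4) *
        (k.factorial:ℝ)^((3:ℝ)/4) := by
      rw [hF4def, hfac4, Real.mul_rpow (by positivity) (by positivity)]
    rw [e04, hsplit]
    have h2 : (0:ℝ) < Real.exp (2*(k:ℝ)) := Real.exp_pos _
    calc ((k:ℝ)+4)^(3:ℕ) * ((k.factorial:ℝ)^((3:ℝ)/4) * Real.exp (2*(k:ℝ))) * 126
        ≤ (23 * (((((k:ℝ)+4) * ((k:ℝ)+3)) * (((k:ℝ)+2) * ((k:ℝ)+1))))^((3:ℝ)/4)) *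
          ((k.factorial:ℝ)^((3:ℝ)/4) * Real.exp (2*(k:ℝ))) * 126 := by
          have := keyC k
          gcongr
      _ = (((((k:ℝ)+4) * ((k:ℝ)+3)) * (((k:ℝ)+2) * ((k:ℝ)+1))))^((3:ℝ)/4) *
          (k.factorial:ℝ)^((3:ℝ)/4) * (Real.exp (2*(k:ℝ)) * 2898) := by ring
      _ ≤ (((((k:ℝ)+4) * ((k:ℝ)+3)) * (((k:ℝ)+2) * ((k:ℝ)+1))))^((3:ℝ)/4) *
          (k.factorial:ℝ)^((3:ℝ)/4) * (Real.exp (2*(k:ℝ)) * Real.exp 8) := by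
          have h8 := exp8_ge
          gcongr
          linarith
  have hF4E4 : (0:ℝ) ≤ F4 * E4 := by rw [hE4def]; positivity
  unfold gbd
  push_cast
  rw [← hF4def, ← hE4def]
  linarith [hA, hB, hC]

lemma j4_le_fact (t : ℕ) : (j4 t : ℝ) ≤ (t.factorial : ℝ) := by
  have h : j4 t ≤ t.factorial := by
    have h2 := Nat.card_le_card_of_injective
      (Subtype.val : {σ : Perm (Fin t) // σ^4=1} → Perm (Fin t)) Subtype.val_injective
    simpa [j4, Nat.card_eq_fintype_card, Fintype.card_perm, Fintype.card_fin] using h2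
  exact_mod_cast h

lemma fact_le_gbd (t : ℕ) (h : (t.factorial:ℝ) ^ ((1:ℝ)/4) ≤ Real.exp (2 * t)) :
    (t.factorial : ℝ) ≤ gbd t := by
  have h0 : (0:ℝ) < t.factorial := by positivity
  have h1 : (t.factorial:ℝ) = (t.factorial:ℝ)^((3:ℝ)/4) * (t.factorial:ℝ)^((1:ℝ)/4) := by
    rw [← Real.rpow_add h0]; norm_num
  rw [h1]
  unfold gbd
  exact mul_le_mul_of_nonneg_left h (by positivity)

lemma j4_le (t : ℕ) : (j4 t : ℝ) ≤ gbd t := by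
  induction t using Nat.strong_induction_on with
  | _ t ih =>
    obtain _ | _ | _ | _ | k := t
    · refine (j4_le_fact 0).trans (fact_le_gbd 0 ?_)
      norm_num
    · refine (j4_le_fact 1).trans (fact_le_gbd 1 ?_)
      norm_num
    · refine (j4_le_fact 2).trans (fact_le_gbd 2 ?_)
      calc ((Nat.factorial 2 : ℕ):ℝ) ^ ((1:ℝ)/4)
          ≤ ((Nat.factorial 2 : ℕ):ℝ) ^ ((1:ℝ)) :=
            Real.rpow_le_rpow_of_exponent_le (by norm_num [Nat.factorial]) (by norm_num)
        _ = ((Nat.factorial 2 : ℕ):ℝ) := Real.rpow_one _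
        _ ≤ Real.exp (2 * ((2:ℕ):ℝ)) := by
            have h4 := Real.add_one_le_exp (2 * ((2:ℕ):ℝ))
            norm_num [Nat.factorial] at h4 ⊢
            linarith
    · refine (j4_le_fact 3).trans (fact_le_gbd 3 ?_)
      calc ((Nat.factorial 3 : ℕ):ℝ) ^ ((1:ℝ)/4)
          ≤ ((Nat.factorial 3 : ℕ):ℝ) ^ ((1:ℝ)) :=
            Real.rpow_le_rpow_of_exponent_le (by norm_num [Nat.factorial]) (by norm_num)
        _ = ((Nat.factorial 3 : ℕ):ℝ) := Real.rpow_one _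
        _ ≤ Real.exp (2 * ((3:ℕ):ℝ)) := by
            have h4 := Real.add_one_le_exp (2 * ((3:ℕ):ℝ))
            norm_num [Nat.factorial] at h4 ⊢
            linarith
    · have hrec := j4_rec (k := k)
      have hcast : (j4 (k+4) : ℝ) ≤ (j4 (k+3) : ℝ) + ((k:ℝ)+4) * (j4 (k+2) : ℝ)
          + ((k:ℝ)+4)^(3:ℕ) * (j4 k : ℝ) := by
        have h2 := (Nat.cast_le (α := ℝ)).mpr hrec
        push_cast at h2
        convert h2 using 2 <;> push_cast <;> ring
      refine hcast.trans (le_trans ?_ (gbd_step k))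
      gcongr
      · exact ih (k+3) (by omega)
      · exact ih (k+2) (by omega)
      · exact ih k (by omega)

/-- j₄(S_t) < (t!)^{3/4}·e^{ct} for an absolute constant c. -/
theorem stmt_15 :
    ∃ c : ℝ, 0 < c ∧ ∀ t : ℕ, 1 ≤ t →
      (Nat.card {σ : Equiv.Perm (Fin t) // σ ^ 4 = 1} : ℝ) <
        (t.factorial : ℝ) ^ ((3 : ℝ) / 4) * Real.exp (c * t) := by
  refine ⟨3, by norm_num, fun t ht => ?_⟩
  have h := j4_le t
  have hlt : Real.exp (2 * t) < Real.exp (3 * t) := by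
    apply Real.exp_lt_exp.mpr
    have h1 : (1:ℝ) ≤ (t:ℝ) := by exact_mod_cast ht
    linarith
  have hpos : (0:ℝ) < (t.factorial : ℝ) ^ ((3:ℝ)/4) := by positivity
  calc (Nat.card {σ : Equiv.Perm (Fin t) // σ ^ 4 = 1} : ℝ) = (j4 t : ℝ) := rfl
    _ ≤ (t.factorial : ℝ) ^ ((3:ℝ)/4) * Real.exp (2 * t) := h
    _ < (t.factorial : ℝ) ^ ((3:ℝ)/4) * Real.exp (3 * t) :=
        mul_lt_mul_of_pos_left hlt hpos
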